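/- (Merge diameter lemma.) Let T be a tree with a cost c(y) associated with each vertex y. Let c_1, …, c_ℓ be ℓ vertex-cost functions and k_1, …, k_ℓ be ℓ constants such that, for every vertex y ∈ V(T), c(y) = max_{i=1,…,ℓ} (c_i(y) + k_i). For every i = 1, …, ℓ, let a_i, b_i be the two endpoints of a diametral path of T w.r.t. the cost function c_i. Then there exist indices i, j ∈ {1, …, ℓ} (possibly i = j) and vertices a ∈ {a_i, b_i} and b ∈ {a_j, b_j} such that: (1) a and b are the two endpoints of a diametral path of T w.r.t. c; (2) c(a) = c_i(a) + k_i; and (3) c(b) = c_j(b) + k_j. -/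

import Mathlib

open SimpleGraph

section TreeLemmas
open SimpleGraph.Walk
variable {V : Type*} [DecidableEq V] {T : SimpleGraph V}

lemma tree_path_length (hT : T.IsTree) {u v : V} (p : T.Walk u v) (hp : p.IsPath) :
    p.length = T.dist u v := by
  obtain ⟨q, hq, hql⟩ := hT.isConnected.exists_path_of_dist u v
  rw [(hT.existsUnique_path u v).unique hp hq, hql]

lemma tree_dist_split (hT : T.IsTree) {u v w : V} (p : T.Walk u v) (hp : p.IsPath)
    (hw : w ∈ p.support) : T.dist u w + T.dist w v = T.dist u v := by
  rw [← tree_path_length hT _ (hp.takeUntil hw), ← tree_path_length hT _ (hp.dropUntil hw),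
    ← tree_path_length hT p hp, ← length_append, take_spec]

lemma append_isPath {u v w : V} {p : T.Walk u v} {q : T.Walk v w} (hp : p.IsPath) (hq : q.IsPath)
    (h : ∀ x, x ∈ p.support → x ∈ q.support → x = v) : (p.append q).IsPath := by
  rw [isPath_def, support_append]
  refine List.Nodup.append hp.support_nodup (hq.support_nodup.tail) ?_
  intro x hxp hxq
  have hxq' : x ∈ q.support := List.mem_of_mem_tail hxq
  have := h x hxp hxq'
  subst this
  have := hq.support_nodup
  rw [support_eq_cons] at this
  exact (List.nodup_cons.mp this).1 hxq

lemma tree_exists_median (hT : T.IsTree) (u v x : V) :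
    ∃ m : V, T.dist u v = T.dist u m + T.dist m v ∧ T.dist u x = T.dist u m + T.dist m x ∧
      T.dist v x = T.dist v m + T.dist m x := by
  obtain ⟨p, hp, hpl⟩ := hT.isConnected.exists_path_of_dist u v
  obtain ⟨m, hm, hmin⟩ := Finset.exists_min_image p.support.toFinset (fun w => T.dist w x)
    ⟨u, by simp⟩
  rw [List.mem_toFinset] at hm
  obtain ⟨q, hq, hql⟩ := hT.isConnected.exists_path_of_dist m x
  -- q meets p only in m
  have key : ∀ w, w ∈ p.support → w ∈ q.support → w = m := by
    intro w hwp hwq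
    have h1 := tree_dist_split hT q hq hwq
    have h2 := hmin w (List.mem_toFinset.mpr hwp)
    have h3 : T.dist m w = 0 := by omega
    have := dist_eq_zero_iff_eq_or_not_reachable.mp h3
    rcases this with h | h
    · exact h.symm
    · exact absurd (hT.isConnected m w) h
  -- u to x via m
  have hux : T.dist u x = T.dist u m + T.dist m x := by
    have hpath : ((p.takeUntil m hm).append q).IsPath := by
      refine append_isPath (hp.takeUntil hm) hq ?_
      intro y hy hy'
      exact key y (p.support_takeUntil_subset hm hy) hy'
    have := tree_path_length hT _ hpath
    rw [length_append, tree_path_length hT _ (hp.takeUntil hm), hql] at this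
    omega
  have hvx : T.dist v x = T.dist v m + T.dist m x := by
    have hpath : (((p.dropUntil m hm).reverse).append q).IsPath := by
      refine append_isPath (hp.dropUntil hm).reverse hq ?_
      intro y hy hy'
      rw [support_reverse, List.mem_reverse] at hy
      exact key y (p.support_dropUntil_subset hm hy) hy'
    have := tree_path_length hT _ hpath
    rw [length_append, length_reverse, tree_path_length hT _ (hp.dropUntil hm), hql] at this
    have h4 := tree_dist_split hT p hp hm
    rw [show T.dist v m = T.dist m v from SimpleGraph.dist_comm]
    omega
  exact ⟨m, (tree_dist_split hT p hp hm).symm, hux, hvx⟩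

lemma tree_mem_geodesic (hT : T.IsTree) {x y w : V}
    (hw : T.dist x w + T.dist w y = T.dist x y)
    (P : T.Walk x y) (hP : P.IsPath) : w ∈ P.support := by
  obtain ⟨p1, hp1, hl1⟩ := hT.isConnected.exists_path_of_dist x w
  obtain ⟨p2, hp2, hl2⟩ := hT.isConnected.exists_path_of_dist w y
  have hlen : (p1.append p2).length = T.dist x y := by
    rw [length_append, hl1, hl2, hw]
  have hpath : (p1.append p2).IsPath := (p1.append p2).isPath_of_length_eq_dist hlen
  have heq := (hT.existsUnique_path x y).unique hpath hP
  rw [← heq]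
  exact mem_support_append_iff _ _ |>.mpr (Or.inl p1.end_mem_support)

lemma tree_between (hT : T.IsTree) {x y p q : V}
    (hp : T.dist x p + T.dist p y = T.dist x y)
    (hq : T.dist x q + T.dist q y = T.dist x y)
    (hle : T.dist x p ≤ T.dist x q) :
    T.dist x p + T.dist p q = T.dist x q := by
  obtain ⟨P, hP, hPl⟩ := hT.isConnected.exists_path_of_dist x y
  have hpP := tree_mem_geodesic hT hp P hP
  have hqP := tree_mem_geodesic hT hq P hP
  have hsplit : p ∈ (P.takeUntil q hqP).support ∨ p ∈ (P.dropUntil q hqP).support := by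
    rw [← mem_support_append_iff, take_spec]
    exact hpP
  rcases hsplit with h | h
  · exact tree_dist_split hT _ (hP.takeUntil hqP) h
  · have h1 := tree_dist_split hT _ (hP.dropUntil hqP) h
    have h2 : T.dist p q = T.dist q p := SimpleGraph.dist_comm
    omega

lemma tree_four_point_aux (hT : T.IsTree) {u v x y mu mv : V}
    (h1 : T.dist x y = T.dist x mu + T.dist mu y)
    (h2 : T.dist x u = T.dist x mu + T.dist mu u)
    (h3 : T.dist y u = T.dist y mu + T.dist mu u)
    (h4 : T.dist x y = T.dist x mv + T.dist mv y)
    (h5 : T.dist x v = T.dist x mv + T.dist mv v)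
    (hle : T.dist x mu ≤ T.dist x mv) :
    T.dist u v + T.dist x y ≤ T.dist u y + T.dist v x := by
  have hb : T.dist x mu + T.dist mu mv = T.dist x mv :=
    tree_between hT h1.symm h4.symm hle
  have ht1 : T.dist u v ≤ T.dist u mu + T.dist mu v :=
    hT.isConnected.dist_triangle
  have ht2 : T.dist mu v ≤ T.dist mu mv + T.dist mv v :=
    hT.isConnected.dist_triangle
  have c1 : T.dist u mu = T.dist mu u := SimpleGraph.dist_comm
  have c2 : T.dist u y = T.dist y u := SimpleGraph.dist_comm
  have c3 : T.dist v x = T.dist x v := SimpleGraph.dist_comm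
  have c4 : T.dist mu y = T.dist y mu := SimpleGraph.dist_comm
  omega

lemma tree_four_point (hT : T.IsTree) (u v x y : V) :
    T.dist u v + T.dist x y ≤
      max (T.dist u x + T.dist v y) (T.dist u y + T.dist v x) := by
  obtain ⟨mu, h1, h2, h3⟩ := tree_exists_median hT x y u
  obtain ⟨mv, h4, h5, h6⟩ := tree_exists_median hT x y v
  rcases le_total (T.dist x mu) (T.dist x mv) with hle | hle
  · exact le_max_of_le_right (tree_four_point_aux hT h1 h2 h3 h4 h5 hle)
  · exact le_max_of_le_left (by
      have := tree_four_point_aux hT h4 h5 h6 h1 h2 hle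
      have c : T.dist v u = T.dist u v := SimpleGraph.dist_comm
      have c2 : T.dist v y = T.dist y v := SimpleGraph.dist_comm
      have c3 : T.dist u x = T.dist x u := SimpleGraph.dist_comm
      have c4 : T.dist v y = T.dist v y := rfl
      omega)

lemma tree_endpoint (hT : T.IsTree) (u v a b : V) (fu fa fb : ℝ)
    (h1 : fu + T.dist u a ≤ fb + T.dist a b)
    (h2 : fu + T.dist u b ≤ fa + T.dist a b) :
    fu + T.dist u v ≤ max (fa + T.dist a v) (fb + T.dist b v) := by
  have h4 := tree_four_point hT u v a b
  have c1 : T.dist v a = T.dist a v := SimpleGraph.dist_comm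
  have c2 : T.dist v b = T.dist b v := SimpleGraph.dist_comm
  rcases le_max_iff.mp (le_refl (max (T.dist u a + T.dist v b) (T.dist u b + T.dist v a))) with _ | _
  all_goals rcases le_max_iff.mp h4 with h | h
  · refine le_max_of_le_right ?_
    have h' : (T.dist u v : ℝ) + T.dist a b ≤ (T.dist u a : ℝ) + T.dist v b := by
      exact_mod_cast Nat.cast_le.mpr h
    have : (T.dist v b : ℝ) = T.dist b v := by exact_mod_cast congrArg Nat.cast c2
    linarith
  · refine le_max_of_le_left ?_
    have h' : (T.dist u v : ℝ) + T.dist a b ≤ (T.dist u b : ℝ) + T.dist v a := by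
      exact_mod_cast Nat.cast_le.mpr h
    have : (T.dist v a : ℝ) = T.dist a v := by exact_mod_cast congrArg Nat.cast c1
    linarith
  · refine le_max_of_le_right ?_
    have h' : (T.dist u v : ℝ) + T.dist a b ≤ (T.dist u a : ℝ) + T.dist v b := by
      exact_mod_cast Nat.cast_le.mpr h
    have : (T.dist v b : ℝ) = T.dist b v := by exact_mod_cast congrArg Nat.cast c2
    linarith
  · refine le_max_of_le_left ?_
    have h' : (T.dist u v : ℝ) + T.dist a b ≤ (T.dist u b : ℝ) + T.dist v a := by
      exact_mod_cast Nat.cast_le.mpr h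
    have : (T.dist v a : ℝ) = T.dist a v := by exact_mod_cast congrArg Nat.cast c1
    linarith

lemma step_lemma {V : Type*} [Fintype V] [DecidableEq V] {T : SimpleGraph V} (hT : T.IsTree)
    {ℓ : ℕ} (hℓ : 0 < ℓ) (cf : Fin ℓ → V → EReal) (hcfTop : ∀ i y, cf i y ≠ ⊤)
    (k : Fin ℓ → ℝ) (c : V → EReal)
    (hc : ∀ y : V, c y = ⨆ i : Fin ℓ, (cf i y + (k i : EReal)))
    (A B : Fin ℓ → V)
    (hAB : ∀ i : Fin ℓ, ∀ a b : V,
      cf i a + ((T.dist a b : ℝ) : EReal) + cf i b ≤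
        cf i (A i) + ((T.dist (A i) (B i) : ℝ) : EReal) + cf i (B i))
    (a0 b0 : V)
    (hmax : ∀ a' b' : V, c a' + ((T.dist a' b' : ℝ) : EReal) + c b' ≤
      c a0 + ((T.dist a0 b0 : ℝ) : EReal) + c b0)
    (ha0 : c a0 ≠ ⊥) (hb0 : c b0 ≠ ⊥) (hcTop : ∀ y, c y ≠ ⊤) :
    ∃ i : Fin ℓ, ∃ a ∈ ({A i, B i} : Set V),
      c a = cf i a + (k i : EReal) ∧ c a ≠ ⊥ ∧
      (∀ a' b' : V, c a' + ((T.dist a' b' : ℝ) : EReal) + c b' ≤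
        c a + ((T.dist a b0 : ℝ) : EReal) + c b0) := by
  haveI : Nonempty (Fin ℓ) := ⟨⟨0, hℓ⟩⟩
  obtain ⟨i, hia⟩ : ∃ i, c a0 = cf i a0 + (k i : EReal) := by
    obtain ⟨i, hi⟩ := Finite.exists_max (fun i : Fin ℓ => cf i a0 + (k i : EReal))
    exact ⟨i, by rw [hc a0]; exact le_antisymm (iSup_le hi) (le_iSup (fun i : Fin ℓ => cf i a0 + (k i : EReal)) i)⟩
  have hua : cf i a0 ≠ ⊥ := fun h => ha0 (by rw [hia, h, EReal.bot_add])
  have hruc : ((cf i a0).toReal : EReal) = cf i a0 := EReal.coe_toReal (hcfTop i a0) hua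
  set ru := (cf i a0).toReal with hru
  have hRHSbot : cf i (A i) + ((T.dist (A i) (B i) : ℝ) : EReal) + cf i (B i) ≠ ⊥ := by
    intro h
    have h2 := (hAB i a0 a0).trans_eq h
    rw [le_bot_iff, EReal.add_eq_bot_iff, EReal.add_eq_bot_iff] at h2
    rcases h2 with (h3 | h3) | h3
    · exact hua h3
    · exact EReal.coe_ne_bot _ h3
    · exact hua h3
  have hAb : cf i (A i) ≠ ⊥ := by
    intro h; exact hRHSbot (by rw [h, EReal.bot_add, EReal.bot_add])
  have hBb : cf i (B i) ≠ ⊥ := by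
    intro h; exact hRHSbot (by rw [h, EReal.add_bot])
  have hrAc : ((cf i (A i)).toReal : EReal) = cf i (A i) := EReal.coe_toReal (hcfTop _ _) hAb
  have hrBc : ((cf i (B i)).toReal : EReal) = cf i (B i) := EReal.coe_toReal (hcfTop _ _) hBb
  set rA := (cf i (A i)).toReal with hrA
  set rB := (cf i (B i)).toReal with hrB
  have h1 : ru + (T.dist a0 (A i) : ℝ) ≤ rB + (T.dist (A i) (B i) : ℝ) := by
    have h := hAB i a0 (A i)
    rw [← hruc, ← hrAc, ← hrBc] at h
    norm_cast at h
    linarith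
  have h2 : ru + (T.dist a0 (B i) : ℝ) ≤ rA + (T.dist (A i) (B i) : ℝ) := by
    have h := hAB i a0 (B i)
    rw [← hruc, ← hrAc, ← hrBc] at h
    norm_cast at h
    linarith
  have hend := tree_endpoint hT a0 b0 (A i) (B i) ru rA rB h1 h2
  obtain ⟨a, hamem, ra, hrac, hineq⟩ : ∃ a, a ∈ ({A i, B i} : Set V) ∧ ∃ ra : ℝ,
      (ra : EReal) = cf i a ∧ ru + (T.dist a0 b0 : ℝ) ≤ ra + (T.dist a b0 : ℝ) := by
    rcases le_max_iff.mp hend with h | h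
    · exact ⟨A i, Or.inl rfl, rA, hrAc, h⟩
    · exact ⟨B i, Or.inr rfl, rB, hrBc, h⟩
  have hge : cf i a + (k i : EReal) ≤ c a := by
    rw [hc a]; exact le_iSup (fun i' => cf i' a + (k i' : EReal)) i
  have hrb0 : ((c b0).toReal : EReal) = c b0 := EReal.coe_toReal (hcTop b0) hb0
  set rb0 := (c b0).toReal with hrb
  have key1 : c a0 + ((T.dist a0 b0 : ℝ) : EReal) + c b0 ≤
      (cf i a + (k i : EReal)) + ((T.dist a b0 : ℝ) : EReal) + c b0 := by
    rw [hia, ← hruc, ← hrac, ← hrb0]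
    norm_cast
    linarith
  have key2 : (cf i a + (k i : EReal)) + ((T.dist a b0 : ℝ) : EReal) + c b0 ≤
      c a + ((T.dist a b0 : ℝ) : EReal) + c b0 :=
    add_le_add (add_le_add hge le_rfl) le_rfl
  have hEq : c a + ((T.dist a b0 : ℝ) : EReal) + c b0 =
      (cf i a + (k i : EReal)) + ((T.dist a b0 : ℝ) : EReal) + c b0 :=
    le_antisymm ((hmax a b0).trans key1) key2
  have hca : c a = cf i a + (k i : EReal) := by
    have h := hEq
    rw [add_assoc, add_assoc, ← hrb0] at h
    rw [show ((T.dist a b0 : ℝ) : EReal) + (rb0 : EReal) = (((T.dist a b0 : ℝ) + rb0 : ℝ) : EReal)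
      from (EReal.coe_add _ _).symm] at h
    exact ((EReal.addLECancellable_coe _).add_le_add_iff_right.mp h.le).antisymm
      ((EReal.addLECancellable_coe _).add_le_add_iff_right.mp h.ge)
  have hnb : c a ≠ ⊥ := by
    intro h
    have hM := key1.trans key2
    rw [h, EReal.bot_add, EReal.bot_add, le_bot_iff, EReal.add_eq_bot_iff,
      EReal.add_eq_bot_iff] at hM
    rcases hM with (h3 | h3) | h3
    · exact ha0 h3
    · exact EReal.coe_ne_bot _ h3
    · exact hb0 h3
  exact ⟨i, a, hamem, hca, hnb, fun a' b' => (hmax a' b').trans (key1.trans key2)⟩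

end TreeLemmas

/-- **Merge diameter lemma.** Let `c(y) = max_i (c_i(y) + k_i)` for vertex-cost
functions `c_1, …, c_ℓ` and constants `k_1, …, k_ℓ`, and let `a_i, b_i` be the endpoints of
a diametral path of `T` w.r.t. `c_i`. Then there are indices `i, j` and vertices
`a ∈ {a_i, b_i}`, `b ∈ {a_j, b_j}` such that `a, b` are the endpoints of a diametral path
of `T` w.r.t. `c`, `c(a) = c_i(a) + k_i` and `c(b) = c_j(b) + k_j`. -/
theorem stmt_5 {V : Type*} [Fintype V] [Nonempty V] (T : SimpleGraph V) (hT : T.IsTree)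
    (ℓ : ℕ) (hℓ : 0 < ℓ)
    (cf : Fin ℓ → V → EReal) (hcfTop : ∀ i y, cf i y ≠ ⊤)
    (k : Fin ℓ → ℝ)
    (c : V → EReal) (hc : ∀ y : V, c y = ⨆ i : Fin ℓ, (cf i y + (k i : EReal)))
    (A B : Fin ℓ → V)
    (hAB : ∀ i : Fin ℓ, ∀ a b : V,
      cf i a + ((T.dist a b : ℝ) : EReal) + cf i b ≤
        cf i (A i) + ((T.dist (A i) (B i) : ℝ) : EReal) + cf i (B i)) :
    ∃ i j : Fin ℓ, ∃ a ∈ ({A i, B i} : Set V), ∃ b ∈ ({A j, B j} : Set V),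
      (∀ a' b' : V, c a' + ((T.dist a' b' : ℝ) : EReal) + c b' ≤
        c a + ((T.dist a b : ℝ) : EReal) + c b) ∧
      c a = cf i a + (k i : EReal) ∧
      c b = cf j b + (k j : EReal) := by
  classical
  have hswap : ∀ (x y : V), c x + ((T.dist x y : ℝ) : EReal) + c y =
      c y + ((T.dist y x : ℝ) : EReal) + c x := by
    intro x y
    rw [show T.dist x y = T.dist y x from SimpleGraph.dist_comm]
    abel
  by_cases hbot : ∀ y : V, c y = ⊥
  · have hcf : ∀ (i : Fin ℓ) (y : V), cf i y = ⊥ := by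
      intro i y
      have h1 : cf i y + (k i : EReal) ≤ c y := by
        rw [hc y]; exact le_iSup (fun i' : Fin ℓ => cf i' y + (k i' : EReal)) i
      rw [hbot y, le_bot_iff, EReal.add_eq_bot_iff] at h1
      rcases h1 with h | h
      · exact h
      · exact absurd h (EReal.coe_ne_bot _)
    refine ⟨⟨0, hℓ⟩, ⟨0, hℓ⟩, A ⟨0, hℓ⟩, Set.mem_insert _ _, A ⟨0, hℓ⟩, Set.mem_insert _ _,
      ?_, ?_, ?_⟩
    · intro a' b'; rw [hbot a', EReal.bot_add, EReal.bot_add]; exact bot_le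
    · rw [hbot, hcf, EReal.bot_add]
    · rw [hbot, hcf, EReal.bot_add]
  · push_neg at hbot
    obtain ⟨y0, hy0⟩ := hbot
    haveI : Nonempty (Fin ℓ) := ⟨⟨0, hℓ⟩⟩
    have hcTop : ∀ y, c y ≠ ⊤ := by
      intro y h
      obtain ⟨i, hi⟩ := Finite.exists_max (fun i : Fin ℓ => cf i y + (k i : EReal))
      have h2 : c y ≤ cf i y + (k i : EReal) := by rw [hc y]; exact iSup_le hi
      rw [h, top_le_iff] at h2
      exact (EReal.add_lt_top (hcfTop i y) (EReal.coe_ne_top _)).ne h2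
    obtain ⟨⟨a0, b0⟩, hmax0⟩ := Finite.exists_max
      (fun p : V × V => c p.1 + ((T.dist p.1 p.2 : ℝ) : EReal) + c p.2)
    have hmax : ∀ a' b' : V, c a' + ((T.dist a' b' : ℝ) : EReal) + c b' ≤
        c a0 + ((T.dist a0 b0 : ℝ) : EReal) + c b0 := fun a' b' => hmax0 (a', b')
    have hMb : c a0 + ((T.dist a0 b0 : ℝ) : EReal) + c b0 ≠ ⊥ := by
      intro h
      have h2 := hmax y0 y0
      rw [h, le_bot_iff, EReal.add_eq_bot_iff, EReal.add_eq_bot_iff] at h2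
      rcases h2 with (h3 | h3) | h3
      · exact hy0 h3
      · exact EReal.coe_ne_bot _ h3
      · exact hy0 h3
    have ha0 : c a0 ≠ ⊥ := fun h => hMb (by rw [h, EReal.bot_add, EReal.bot_add])
    have hb0 : c b0 ≠ ⊥ := fun h => hMb (by rw [h, EReal.add_bot])
    obtain ⟨i, a, hamem, hca, hanb, hmax2⟩ :=
      step_lemma hT hℓ cf hcfTop k c hc A B hAB a0 b0 hmax ha0 hb0 hcTop
    have hmax2' : ∀ a' b' : V, c a' + ((T.dist a' b' : ℝ) : EReal) + c b' ≤
        c b0 + ((T.dist b0 a : ℝ) : EReal) + c a :=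
      fun a' b' => (hmax2 a' b').trans_eq (hswap a b0)
    obtain ⟨j, b, hbmem, hcb, hbnb, hmax3⟩ :=
      step_lemma hT hℓ cf hcfTop k c hc A B hAB b0 a hmax2' hb0 hanb hcTop
    refine ⟨i, j, a, hamem, b, hbmem, ?_, hca, hcb⟩
    intro a' b'
    exact (hmax3 a' b').trans_eq (hswap b a)
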